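/- Let E be a complex Banach space, m ≥ 1 an integer, ω > 0, and c₂ ≥ c₁ ≥ 1. Let b : E → E be a bounded linear operator with ‖b‖ ≤ c₂ such that for every μ ∈ ℂ with Re μ ≥ 0 the operator μ·id + b is invertible with (1 + |μ|)·‖(μ·id + b)^{−1}‖ ≤ c₁. Then there exists C > 0, depending only on ω, m, c₁, c₂, such that for every λ ∈ ℂ with Re λ ≥ ω and every k ∈ ℤ ∖ {0}: |k|^{2m+2} · ‖ M_{k+1} − 2·M_k + M_{k−1} ‖ ≤ C, where M_j := (λ·id + j^{2m}·b)^{−1} for j ∈ ℤ (so in particular M_0 = λ^{−1}·id). -/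

import Mathlib

lemma intA (k : ℤ) (hk : 1 ≤ |k|) (t : ℕ) :
    |(k+1)^(t+1) - k^(t+1)| ≤ 2^(t+1) * |k|^t := by
  have h := add_pow k 1 (t+1)
  simp only [one_pow, mul_one] at h
  rw [Finset.sum_range_succ] at h
  simp only [Nat.choose_self, Nat.cast_one, mul_one] at h
  have h2 : (k+1)^(t+1) - k^(t+1) = ∑ i ∈ Finset.range (t+1), k^i * (Nat.choose (t+1) i : ℤ) := by
    rw [h]; ring
  rw [h2]
  calc |∑ i ∈ Finset.range (t+1), k^i * (Nat.choose (t+1) i : ℤ)|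
      ≤ ∑ i ∈ Finset.range (t+1), |k^i * (Nat.choose (t+1) i : ℤ)| :=
        Finset.abs_sum_le_sum_abs _ _
    _ ≤ ∑ i ∈ Finset.range (t+1), |k|^t * (Nat.choose (t+1) i : ℤ) := by
        apply Finset.sum_le_sum
        intro i hi
        rw [abs_mul, abs_pow, abs_of_nonneg (by positivity : (0:ℤ) ≤ (Nat.choose (t+1) i : ℤ))]
        have : |k|^i ≤ |k|^t :=
          pow_le_pow_right₀ hk (Nat.lt_succ_iff.mp (Finset.mem_range.mp hi))
        exact mul_le_mul_of_nonneg_right this (by positivity)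
    _ = |k|^t * ∑ i ∈ Finset.range (t+1), (Nat.choose (t+1) i : ℤ) := by
        rw [Finset.mul_sum]
    _ ≤ |k|^t * ∑ i ∈ Finset.range (t+2), (Nat.choose (t+1) i : ℤ) := by
        apply mul_le_mul_of_nonneg_left _ (by positivity)
        apply Finset.sum_le_sum_of_subset_of_nonneg (Finset.range_subset_range.mpr (by omega))
        intro i _ _; positivity
    _ = 2^(t+1) * |k|^t := by
        have := Nat.sum_range_choose (t+1)
        have : ∑ i ∈ Finset.range (t+2), (Nat.choose (t+1) i : ℤ) = 2^(t+1) := by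
          exact_mod_cast congrArg (Nat.cast : ℕ → ℤ) this
        rw [this, mul_comm]

lemma intB (k : ℤ) (hk : 1 ≤ |k|) (t : ℕ) :
    |k^(t+1) - (k-1)^(t+1)| ≤ 2^(t+1) * |k|^t := by
  have h := intA (-k) (by rwa [abs_neg]) t
  have e1 : -k+1 = -(k-1) := by ring
  rw [e1, neg_pow, neg_pow k, ← mul_sub, abs_mul, abs_pow, abs_neg, abs_one, one_pow, one_mul,
    abs_sub_comm, abs_neg] at h
  exact h

lemma intC (k : ℤ) (hk : 1 ≤ |k|) (s : ℕ) :
    |(k+1)^(s+2) - 2*k^(s+2) + (k-1)^(s+2)| ≤ 2^(s+3) * |k|^s := by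
  have h1 := add_pow k 1 (s+2)
  simp only [one_pow, mul_one] at h1
  have h2 := add_pow k (-1) (s+2)
  rw [Finset.sum_range_succ, Finset.sum_range_succ] at h1 h2
  have e : (k+1)^(s+2) - 2*k^(s+2) + (k-1)^(s+2) =
      ∑ i ∈ Finset.range (s+1), k^i * (1 + (-1)^(s+2-i)) * (Nat.choose (s+2) i : ℤ) := by
    have hk1 : k - 1 = k + (-1) := by ring
    have hsplit : (∑ i ∈ Finset.range (s+1), k^i * (1 + (-1)^(s+2-i)) * (Nat.choose (s+2) i : ℤ))
        = (∑ i ∈ Finset.range (s+1), k^i * (Nat.choose (s+2) i : ℤ))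
          + ∑ i ∈ Finset.range (s+1), k^i * (-1)^(s+2-i) * (Nat.choose (s+2) i : ℤ) := by
      rw [← Finset.sum_add_distrib]
      exact Finset.sum_congr rfl (fun i _ => by ring)
    rw [hk1, h1, h2, hsplit]
    simp only [show s+2-(s+1) = 1 by omega, show s+2-(s+2) = 0 by omega, pow_one, pow_zero,
      Nat.choose_self, Nat.cast_one]
    ring
  rw [e]
  calc |∑ i ∈ Finset.range (s+1), k^i * (1 + (-1)^(s+2-i)) * (Nat.choose (s+2) i : ℤ)|
      ≤ ∑ i ∈ Finset.range (s+1), |k^i * (1 + (-1)^(s+2-i)) * (Nat.choose (s+2) i : ℤ)| :=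
        Finset.abs_sum_le_sum_abs _ _
    _ ≤ ∑ i ∈ Finset.range (s+1), |k|^s * 2 * (Nat.choose (s+2) i : ℤ) := by
        apply Finset.sum_le_sum
        intro i hi
        rw [abs_mul, abs_mul, abs_pow,
          abs_of_nonneg (by positivity : (0:ℤ) ≤ (Nat.choose (s+2) i : ℤ))]
        have h1' : |k|^i ≤ |k|^s :=
          pow_le_pow_right₀ hk (Nat.lt_succ_iff.mp (Finset.mem_range.mp hi))
        have h2' : |1 + (-1:ℤ)^(s+2-i)| ≤ 2 := by
          rcases Nat.even_or_odd (s+2-i) with he | ho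
          · rw [he.neg_one_pow]; norm_num
          · rw [ho.neg_one_pow]; norm_num
        have := mul_le_mul (mul_le_mul h1' h2' (abs_nonneg _) (by positivity))
          (le_refl ((Nat.choose (s+2) i : ℤ))) (by positivity) (by positivity)
        exact this
    _ = |k|^s * 2 * ∑ i ∈ Finset.range (s+1), (Nat.choose (s+2) i : ℤ) := by
        rw [Finset.mul_sum]
    _ ≤ |k|^s * 2 * ∑ i ∈ Finset.range (s+3), (Nat.choose (s+2) i : ℤ) := by
        apply mul_le_mul_of_nonneg_left _ (by positivity)
        apply Finset.sum_le_sum_of_subset_of_nonneg (Finset.range_subset_range.mpr (by omega))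
        intro i _ _; positivity
    _ = 2^(s+3) * |k|^s := by
        have h3 : ∑ i ∈ Finset.range (s+3), (Nat.choose (s+2) i : ℤ) = 2^(s+2) := by
          exact_mod_cast congrArg (Nat.cast : ℕ → ℤ) (Nat.sum_range_choose (s+2))
        rw [h3]; ring

lemma key_inv (E : Type*) [NormedAddCommGroup E] [NormedSpace ℂ E]
    (m : ℕ) (hm : 1 ≤ m) (ω c₁ : ℝ) (hω : 0 < ω) (hc₁ : 1 ≤ c₁)
    (b : E →L[ℂ] E)
    (hb : ∀ μ : ℂ, 0 ≤ μ.re → ∃ J : E →L[ℂ] E,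
      (μ • (1 : E →L[ℂ] E) + b) * J = 1 ∧ J * (μ • (1 : E →L[ℂ] E) + b) = 1 ∧
      (1 + ‖μ‖) * ‖J‖ ≤ c₁)
    (lam : ℂ) (hlam : ω ≤ lam.re) (j : ℤ) :
    ∃ N : E →L[ℂ] E,
      (lam • (1 : E →L[ℂ] E) + ((j : ℂ) ^ (2 * m)) • b) * N = 1 ∧
      N * (lam • (1 : E →L[ℂ] E) + ((j : ℂ) ^ (2 * m)) • b) = 1 ∧
      (|(j : ℝ)| ^ (2 * m) + ‖lam‖) * ‖N‖ ≤ c₁ := by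
  have hlre : 0 < lam.re := lt_of_lt_of_le hω hlam
  have hlne : lam ≠ 0 := fun h => by simp [h] at hlre
  have habs : ω ≤ ‖lam‖ := le_trans hlam (Complex.re_le_norm lam)
  have habs0 : 0 < ‖lam‖ := lt_of_lt_of_le hω habs
  rcases eq_or_ne j 0 with rfl | hj
  · refine ⟨lam⁻¹ • 1, ?_, ?_, ?_⟩
    · simp only [Int.cast_zero, zero_pow (by omega : 2*m ≠ 0), zero_smul, add_zero,
        smul_mul_assoc, one_mul, smul_smul, mul_inv_cancel₀ hlne, one_smul]
    · simp only [Int.cast_zero, zero_pow (by omega : 2*m ≠ 0), zero_smul, add_zero,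
        smul_mul_assoc, one_mul, smul_smul, inv_mul_cancel₀ hlne, one_smul]
    · have h1 : ‖(1 : E →L[ℂ] E)‖ ≤ 1 := ContinuousLinearMap.norm_id_le
      have : ‖lam⁻¹ • (1 : E →L[ℂ] E)‖ ≤ (‖lam‖)⁻¹ := by
        rw [norm_smul lam⁻¹ (1 : E →L[ℂ] E), norm_inv]
        calc (‖lam‖)⁻¹ * ‖(1 : E →L[ℂ] E)‖ ≤ (‖lam‖)⁻¹ * 1 := by
              exact mul_le_mul_of_nonneg_left h1 (by positivity)
          _ = (‖lam‖)⁻¹ := mul_one _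
      simp only [Int.cast_zero, abs_zero, zero_pow (by omega : 2*m ≠ 0), zero_add]
      calc ‖lam‖ * ‖lam⁻¹ • (1 : E →L[ℂ] E)‖
          ≤ ‖lam‖ * (‖lam‖)⁻¹ := mul_le_mul_of_nonneg_left this habs0.le
        _ = 1 := mul_inv_cancel₀ habs0.ne'
        _ ≤ c₁ := hc₁
  · set r : ℝ := |(j : ℝ)| ^ (2 * m) with hr
    have hjR : ((j:ℝ)) ≠ 0 := Int.cast_ne_zero.mpr hj
    have hrpos : 0 < r := by positivity
    have hz : ((j : ℂ)) ^ (2 * m) = ((r : ℝ) : ℂ) := by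
      rw [hr, (even_two_mul m).pow_abs]
      push_cast
      ring
    set μ : ℂ := ((r⁻¹ : ℝ) : ℂ) * lam with hμ
    have hμre : 0 ≤ μ.re := by
      rw [hμ, Complex.re_ofReal_mul]
      positivity
    obtain ⟨J, hJ1, hJ2, hJ3⟩ := hb μ hμre
    have hrr : ((r : ℝ) : ℂ) * ((r⁻¹ : ℝ) : ℂ) = 1 := by
      rw [← Complex.ofReal_mul, mul_inv_cancel₀ hrpos.ne', Complex.ofReal_one]
    have hA : lam • (1 : E →L[ℂ] E) + ((j : ℂ) ^ (2 * m)) • b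
        = ((r:ℝ):ℂ) • (μ • (1 : E →L[ℂ] E) + b) := by
      rw [smul_add, smul_smul, hz, hμ, ← mul_assoc, hrr, one_mul]
    refine ⟨((r⁻¹:ℝ):ℂ) • J, ?_, ?_, ?_⟩
    · rw [hA, smul_mul_assoc, mul_smul_comm, hJ1, smul_smul, hrr, one_smul]
    · rw [hA, smul_mul_assoc, mul_smul_comm, hJ2, smul_smul, ← Complex.ofReal_mul,
        inv_mul_cancel₀ hrpos.ne']
      norm_num
    · have hnorm : ‖((r⁻¹:ℝ):ℂ) • J‖ = r⁻¹ * ‖J‖ := by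
        rw [norm_smul ((r⁻¹:ℝ):ℂ) J, Complex.norm_real, Real.norm_eq_abs, abs_of_nonneg (by positivity : (0:ℝ) ≤ r⁻¹)]
      have habsμ : ‖μ‖ = r⁻¹ * ‖lam‖ := by
        rw [hμ, norm_mul, Complex.norm_real, Real.norm_eq_abs, abs_of_nonneg (by positivity)]
      rw [hnorm]
      have : (r + ‖lam‖) * (r⁻¹ * ‖J‖) = (1 + ‖μ‖) * ‖J‖ := by
        rw [habsμ]
        field_simp
      rw [this]
      exact hJ3


private lemma nm3 {E : Type*} [NormedAddCommGroup E] [NormedSpace ℂ E]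
    (x y z : E →L[ℂ] E) : ‖x*y*z‖ ≤ ‖x‖*‖y‖*‖z‖ :=
  le_trans (norm_mul_le _ _) (mul_le_mul_of_nonneg_right (norm_mul_le _ _) (norm_nonneg _))

private lemma nm5 {E : Type*} [NormedAddCommGroup E] [NormedSpace ℂ E]
    (x y z w v : E →L[ℂ] E) : ‖x*y*z*w*v‖ ≤ ‖x‖*‖y‖*‖z‖*‖w‖*‖v‖ := by
  calc ‖x*y*z*w*v‖ ≤ ‖x*y*z*w‖*‖v‖ := norm_mul_le _ _
    _ ≤ (‖x*y*z‖*‖w‖)*‖v‖ :=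
        mul_le_mul_of_nonneg_right (norm_mul_le _ _) (norm_nonneg _)
    _ ≤ ((‖x‖*‖y‖*‖z‖)*‖w‖)*‖v‖ := by
        apply mul_le_mul_of_nonneg_right _ (norm_nonneg _)
        exact mul_le_mul_of_nonneg_right (nm3 x y z) (norm_nonneg _)

set_option maxHeartbeats 1000000 in
/-- Uniform bound for the second difference of the operator-valued resolvent symbol
`M_j = (λ·id + j^{2m}·b)⁻¹`: there is `C = C(ω, m, c₁, c₂) > 0` such that for every
`λ` with `Re λ ≥ ω` and every nonzero `k ∈ ℤ`,
`|k|^{2m+2} · ‖M_{k+1} − 2M_k + M_{k−1}‖ ≤ C`. -/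
theorem second_difference_symbol_bound
    (E : Type*) [NormedAddCommGroup E] [NormedSpace ℂ E] [CompleteSpace E]
    (m : ℕ) (hm : 1 ≤ m) (ω c₁ c₂ : ℝ) (hω : 0 < ω) (hc₁ : 1 ≤ c₁) (hc : c₁ ≤ c₂)
    (b : E →L[ℂ] E) (hbn : ‖b‖ ≤ c₂)
    (hb : ∀ μ : ℂ, 0 ≤ μ.re → ∃ J : E →L[ℂ] E,
      (μ • (1 : E →L[ℂ] E) + b) * J = 1 ∧ J * (μ • (1 : E →L[ℂ] E) + b) = 1 ∧
      (1 + ‖μ‖) * ‖J‖ ≤ c₁) :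
    ∃ C > (0 : ℝ), ∀ lam : ℂ, ω ≤ lam.re →
      ∃ M : ℤ → E →L[ℂ] E,
        (∀ j : ℤ, (lam • (1 : E →L[ℂ] E) + ((j : ℂ) ^ (2 * m)) • b) * M j = 1 ∧
            M j * (lam • (1 : E →L[ℂ] E) + ((j : ℂ) ^ (2 * m)) • b) = 1) ∧
        ∀ k : ℤ, k ≠ 0 →
          |(k : ℝ)| ^ (2 * m + 2) * ‖M (k + 1) - 2 • M k + M (k - 1)‖ ≤ C := by
  obtain ⟨s, rfl⟩ : ∃ s, m = s + 1 := ⟨m - 1, by omega⟩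
  have hc₁0 : (0:ℝ) < c₁ := lt_of_lt_of_le one_pos hc₁
  have hc₂0 : (0:ℝ) < c₂ := lt_of_lt_of_le hc₁0 hc
  set c₃ : ℝ := c₁ * (1 + ω⁻¹) * 2^(2*(s+1)) with hc₃def
  have hc₃0 : 0 < c₃ := by
    apply mul_pos (mul_pos hc₁0 _) (by positivity)
    have : 0 < ω⁻¹ := by positivity
    linarith
  refine ⟨2*(2^(2*s+2))^2*c₂^2*c₃^3 + 2^(2*s+3)*c₂*c₃^2, by positivity, ?_⟩
  intro lam hlam
  have habs : ω ≤ ‖lam‖ := le_trans hlam (Complex.re_le_norm lam)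
  choose M hM1 hM2 hM3 using fun j : ℤ =>
    key_inv E (s+1) (by omega) ω c₁ hω hc₁ b hb lam hlam j
  refine ⟨M, fun j => ⟨hM1 j, hM2 j⟩, ?_⟩
  intro k hk
  -- basic positivity facts
  set K : ℝ := |(k:ℝ)| with hKdef
  have hkabs : 1 ≤ |k| := Int.one_le_abs hk
  have hK1 : (1:ℝ) ≤ K := by
    rw [hKdef, ← Int.cast_abs]; exact_mod_cast hkabs
  have hK0 : (0:ℝ) < K := lt_of_lt_of_le one_pos hK1
  -- uniform norm bounds
  have hMabs : ∀ j : ℤ, ‖M j‖ * |(j:ℝ)|^(2*(s+1)) ≤ c₁ := by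
    intro j
    have h := hM3 j
    nlinarith [norm_nonneg (M j), mul_nonneg (norm_nonneg lam) (norm_nonneg (M j))]
  have hMω : ∀ j : ℤ, ‖M j‖ * ω ≤ c₁ := by
    intro j
    have h := hM3 j
    have h2 : 0 ≤ |(j:ℝ)|^(2*(s+1)) := by positivity
    nlinarith [norm_nonneg (M j)]
  -- the three resolvent norm bounds q,p,r
  have hQ : ‖M k‖ * K^(2*(s+1)) ≤ c₃ := by
    have h := hMabs k
    have h2 : c₁ ≤ c₃ := by
      rw [hc₃def]
      have e2 : (1:ℝ) ≤ 2^(2*(s+1)) := one_le_pow₀ (by norm_num)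
      have e1 : (0:ℝ) < ω⁻¹ := inv_pos.mpr hω
      calc c₁ = c₁ * 1 * 1 := by ring
        _ ≤ c₁ * (1 + ω⁻¹) * 2^(2*(s+1)) := by gcongr <;> linarith
    linarith
  have hnb : ∀ j : ℤ, (j = k+1 ∨ j = k-1) → ‖M j‖ * K^(2*(s+1)) ≤ c₃ := by
    intro j hj
    rcases eq_or_ne j 0 with rfl | hj0
    · have hkval : k = -1 ∨ k = 1 := by omega
      have hKone : K = 1 := by
        rcases hkval with rfl | rfl <;> norm_num [hKdef]
      rw [hKone, one_pow, mul_one]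
      have h := hMω 0
      have : ‖M 0‖ ≤ c₁ * ω⁻¹ := by
        have h' : ‖M 0‖ ≤ c₁ / ω := (le_div_iff₀ hω).mpr h
        rw [div_eq_mul_inv] at h'
        exact h'
      calc ‖M 0‖ ≤ c₁ * ω⁻¹ := this
        _ ≤ c₃ := by
          rw [hc₃def]
          nlinarith [one_le_pow₀ (by norm_num : (1:ℝ) ≤ 2) (n := 2*(s+1)),
            inv_pos.mpr hω]
    · have h2j : |k| ≤ 2 * |j| := by
        rcases hj with rfl | rfl <;>
          · rw [Int.abs_eq_natAbs, Int.abs_eq_natAbs]; omega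
      have h2jR : K ≤ 2 * |(j:ℝ)| := by
        rw [hKdef, ← Int.cast_abs]
        calc ((|k|:ℤ):ℝ) ≤ ((2*|j|:ℤ):ℝ) := by exact_mod_cast h2j
          _ = 2 * |(j:ℝ)| := by push_cast; ring
      have hpow : K^(2*(s+1)) ≤ 2^(2*(s+1)) * |(j:ℝ)|^(2*(s+1)) := by
        calc K^(2*(s+1)) ≤ (2*|(j:ℝ)|)^(2*(s+1)) :=
              pow_le_pow_left₀ (by positivity) h2jR _
          _ = 2^(2*(s+1)) * |(j:ℝ)|^(2*(s+1)) := mul_pow _ _ _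
      have h := hMabs j
      calc ‖M j‖ * K^(2*(s+1)) ≤ ‖M j‖ * (2^(2*(s+1)) * |(j:ℝ)|^(2*(s+1))) :=
            mul_le_mul_of_nonneg_left hpow (norm_nonneg _)
        _ = 2^(2*(s+1)) * (‖M j‖ * |(j:ℝ)|^(2*(s+1))) := by ring
        _ ≤ 2^(2*(s+1)) * c₁ := by
            apply mul_le_mul_of_nonneg_left h (by positivity)
        _ ≤ c₃ := by
            rw [hc₃def]
            nlinarith [pow_pos (by norm_num : (0:ℝ) < 2) (2*(s+1)), inv_pos.mpr hω]
  have hP : ‖M (k+1)‖ * K^(2*(s+1)) ≤ c₃ := hnb (k+1) (Or.inl rfl)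
  have hR : ‖M (k-1)‖ * K^(2*(s+1)) ≤ c₃ := hnb (k-1) (Or.inr rfl)
  -- resolvent identity
  have res : ∀ i j : ℤ, M i - M j =
      (((j:ℂ)^(2*(s+1)) - ((i:ℂ))^(2*(s+1)))) • ((M i * b) * M j) := by
    intro i j
    have h1 : (lam • (1:E→L[ℂ]E) + ((j:ℂ)^(2*(s+1))) • b) * M j = 1 := hM1 j
    have h2 : M i * (lam • (1:E→L[ℂ]E) + ((i:ℂ)^(2*(s+1))) • b) = 1 := hM2 i
    have hkey : M i * (((lam • (1:E→L[ℂ]E) + ((j:ℂ)^(2*(s+1))) • b)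
        - (lam • (1:E→L[ℂ]E) + ((i:ℂ)^(2*(s+1))) • b)) * M j) = M i - M j := by
      rw [sub_mul, mul_sub, h1, mul_one, ← mul_assoc, h2, one_mul]
    have hdiff : (lam • (1:E→L[ℂ]E) + ((j:ℂ)^(2*(s+1))) • b)
        - (lam • (1:E→L[ℂ]E) + ((i:ℂ)^(2*(s+1))) • b)
        = (((j:ℂ)^(2*(s+1)) - ((i:ℂ))^(2*(s+1)))) • b := by module
    rw [← hkey, hdiff, smul_mul_assoc, mul_smul_comm, ← mul_assoc]
  -- abbreviations
  set e₁ : ℂ := ((k+1 : ℤ):ℂ)^(2*(s+1)) - ((k:ℤ):ℂ)^(2*(s+1)) with he₁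
  set e₀ : ℂ := ((k:ℤ):ℂ)^(2*(s+1)) - ((k-1 : ℤ):ℂ)^(2*(s+1)) with he₀
  set X : E →L[ℂ] E := (M (k+1) * b) * M k with hXdef
  set Y : E →L[ℂ] E := (M k * b) * M (k-1) with hYdef
  set U : E →L[ℂ] E := ((M (k+1) * b) * M k * b) * M k with hUdef
  set V : E →L[ℂ] E := (M k * b) * ((M k * b) * M (k-1)) with hVdef
  have hX : M (k+1) - M k = (-e₁) • X := by
    rw [res (k+1) k, show ((k:ℂ)^(2*(s+1)) - ((k+1:ℤ):ℂ)^(2*(s+1))) = -e₁ by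
      rw [he₁]; ring]
  have hX0 : M k - M (k-1) = (-e₀) • Y := by
    rw [res k (k-1), show (((k-1:ℤ):ℂ)^(2*(s+1)) - ((k:ℤ):ℂ)^(2*(s+1))) = -e₀ by
      rw [he₀]; ring]
  have hd : X - Y = (M (k+1) - M k) * b * M k + (M k * b) * (M k - M (k-1)) := by
    rw [hXdef, hYdef]; noncomm_ring
  have hXY : X = Y + ((-e₁) • U) + ((-e₀) • V) := by
    have h1 : (M (k+1) - M k) * b * M k = (-e₁) • U := by
      rw [hX, smul_mul_assoc, smul_mul_assoc, hUdef]
    have h2 : (M k * b) * (M k - M (k-1)) = (-e₀) • V := by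
      rw [hX0, mul_smul_comm, hVdef]
    have := hd
    rw [h1, h2] at this
    have := sub_eq_iff_eq_add.mp this
    rw [this]; abel
  have hS : M (k+1) - 2 • M k + M (k-1)
      = (e₀ - e₁) • Y + (e₁^2) • U + (e₁*e₀) • V := by
    calc M (k+1) - 2 • M k + M (k-1)
        = (M (k+1) - M k) - (M k - M (k-1)) := by
          rw [two_smul]; abel
      _ = (-e₁) • X - (-e₀) • Y := by rw [hX, hX0]
      _ = (-e₁) • (Y + ((-e₁) • U) + ((-e₀) • V)) - (-e₀) • Y := by rw [hXY]
      _ = (e₀ - e₁) • Y + (e₁^2) • U + (e₁*e₀) • V := by module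
  -- norm bounds for products
  have hNY : ‖Y‖ ≤ ‖M k‖*‖b‖*‖M (k-1)‖ := nm3 _ _ _
  have hNU : ‖U‖ ≤ ‖M (k+1)‖*‖b‖*‖M k‖*‖b‖*‖M k‖ := nm5 _ _ _ _ _
  have hNV : ‖V‖ ≤ (‖M k‖*‖b‖)*(‖M k‖*‖b‖*‖M (k-1)‖) :=
    le_trans (norm_mul_le _ _)
      (mul_le_mul (norm_mul_le _ _) (nm3 _ _ _) (norm_nonneg _)
        (by positivity))
  have hnS : ‖M (k+1) - 2 • M k + M (k-1)‖
      ≤ ‖e₀ - e₁‖ * ‖Y‖ + (‖e₁‖)^2 * ‖U‖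
        + (‖e₁‖ * ‖e₀‖) * ‖V‖ := by
    rw [hS]
    refine le_trans (norm_add₃_le) ?_
    rw [norm_smul (e₀ - e₁) Y, norm_smul (e₁^2) U, norm_smul (e₁*e₀) V,
      norm_pow, norm_mul e₁ e₀]
  -- numeric bounds on the coefficients
  have hE1 : ‖e₁‖ ≤ 2^(2*s+2) * K^(2*s+1) := by
    have hi := intA k hkabs (2*s+1)
    rw [show 2*s+1+1 = 2*(s+1) by ring] at hi
    have hcast : e₁ = (((k+1)^(2*(s+1)) - k^(2*(s+1)) : ℤ) : ℂ) := by
      rw [he₁]; push_cast; ring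
    rw [hcast, Complex.norm_intCast, ← Int.cast_abs]
    rw [hKdef, ← Int.cast_abs]
    calc ((|(k+1)^(2*(s+1)) - k^(2*(s+1))| : ℤ) : ℝ)
        ≤ ((2^(2*(s+1)) * |k|^(2*s+1) : ℤ) : ℝ) := by exact_mod_cast hi
      _ = 2^(2*s+2) * ((|k|:ℤ):ℝ)^(2*s+1) := by
          push_cast; rw [show 2*(s+1) = 2*s+2 by ring]
  have hE0 : ‖e₀‖ ≤ 2^(2*s+2) * K^(2*s+1) := by
    have hi := intB k hkabs (2*s+1)
    rw [show 2*s+1+1 = 2*(s+1) by ring] at hi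
    have hcast : e₀ = ((k^(2*(s+1)) - (k-1)^(2*(s+1)) : ℤ) : ℂ) := by
      rw [he₀]; push_cast; ring
    rw [hcast, Complex.norm_intCast, ← Int.cast_abs]
    rw [hKdef, ← Int.cast_abs]
    calc ((|k^(2*(s+1)) - (k-1)^(2*(s+1))| : ℤ) : ℝ)
        ≤ ((2^(2*(s+1)) * |k|^(2*s+1) : ℤ) : ℝ) := by exact_mod_cast hi
      _ = 2^(2*s+2) * ((|k|:ℤ):ℝ)^(2*s+1) := by
          push_cast; rw [show 2*(s+1) = 2*s+2 by ring]
  have hE2 : ‖e₀ - e₁‖ ≤ 2^(2*s+3) * K^(2*s) := by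
    have hi := intC k hkabs (2*s)
    rw [show 2*s+2 = 2*(s+1) by ring] at hi
    have hcast : e₀ - e₁ = ((-((k+1)^(2*(s+1)) - 2*k^(2*(s+1)) + (k-1)^(2*(s+1))) : ℤ) : ℂ) := by
      rw [he₀, he₁]; push_cast; ring
    rw [hcast, Complex.norm_intCast, ← Int.cast_abs, abs_neg]
    rw [hKdef, ← Int.cast_abs]
    calc ((|(k+1)^(2*(s+1)) - 2*k^(2*(s+1)) + (k-1)^(2*(s+1))| : ℤ) : ℝ)
        ≤ ((2^(2*s+3) * |k|^(2*s) : ℤ) : ℝ) := by exact_mod_cast hi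
      _ = 2^(2*s+3) * ((|k|:ℤ):ℝ)^(2*s) := by push_cast; ring
  -- final assembly
  rw [show 2*(s+1)+2 = 2*(s+1)+2 from rfl]
  have habs10 : (0:ℝ) ≤ ‖e₁‖ := norm_nonneg _
  have habs00 : (0:ℝ) ≤ ‖e₀‖ := norm_nonneg _
  have hbn0 : (0:ℝ) ≤ ‖b‖ := norm_nonneg _
  have hQ0 : (0:ℝ) ≤ ‖M k‖ := norm_nonneg _
  have hP0 : (0:ℝ) ≤ ‖M (k+1)‖ := norm_nonneg _
  have hR0 : (0:ℝ) ≤ ‖M (k-1)‖ := norm_nonneg _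
  have T3 : K^(2*(s+1)+2) * (‖e₀-e₁‖ * ‖Y‖) ≤ 2^(2*s+3)*c₂*c₃^2 := by
    have h1 : K^(2*(s+1)+2) * (‖e₀-e₁‖ * ‖Y‖)
        ≤ K^(2*(s+1)+2) * ((2^(2*s+3) * K^(2*s)) * (‖M k‖*‖b‖*‖M (k-1)‖)) := by
      gcongr
    have h2 : K^(2*(s+1)+2) * ((2^(2*s+3) * K^(2*s)) * (‖M k‖*‖b‖*‖M (k-1)‖))
        = 2^(2*s+3) * ((‖M k‖*K^(2*(s+1)))*‖b‖*(‖M (k-1)‖*K^(2*(s+1)))) := by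
      ring
    rw [h2] at h1
    refine le_trans h1 ?_
    calc 2^(2*s+3) * ((‖M k‖*K^(2*(s+1)))*‖b‖*(‖M (k-1)‖*K^(2*(s+1))))
        ≤ 2^(2*s+3) * (c₃*c₂*c₃) := by
          gcongr <;> positivity
      _ = 2^(2*s+3)*c₂*c₃^2 := by ring
  have T1 : K^(2*(s+1)+2) * ((‖e₁‖)^2 * ‖U‖) ≤ (2^(2*s+2))^2*c₂^2*c₃^3 := by
    have h1 : K^(2*(s+1)+2) * ((‖e₁‖)^2 * ‖U‖)
        ≤ K^(2*(s+1)+2) * ((2^(2*s+2) * K^(2*s+1))^2 * (‖M (k+1)‖*‖b‖*‖M k‖*‖b‖*‖M k‖)) := by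
      gcongr
    have h2 : K^(2*(s+1)+2) * ((2^(2*s+2) * K^(2*s+1))^2 * (‖M (k+1)‖*‖b‖*‖M k‖*‖b‖*‖M k‖))
        = (2^(2*s+2))^2 * ((‖M (k+1)‖*K^(2*(s+1)))*‖b‖*(‖M k‖*K^(2*(s+1)))*‖b‖*(‖M k‖*K^(2*(s+1)))) := by
      ring
    rw [h2] at h1
    refine le_trans h1 ?_
    calc (2^(2*s+2))^2 * ((‖M (k+1)‖*K^(2*(s+1)))*‖b‖*(‖M k‖*K^(2*(s+1)))*‖b‖*(‖M k‖*K^(2*(s+1))))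
        ≤ (2^(2*s+2))^2 * (c₃*c₂*c₃*c₂*c₃) := by
          gcongr <;> positivity
      _ = (2^(2*s+2))^2*c₂^2*c₃^3 := by ring
  have T2 : K^(2*(s+1)+2) * ((‖e₁‖ * ‖e₀‖) * ‖V‖) ≤ (2^(2*s+2))^2*c₂^2*c₃^3 := by
    have h1 : K^(2*(s+1)+2) * ((‖e₁‖ * ‖e₀‖) * ‖V‖)
        ≤ K^(2*(s+1)+2) * (((2^(2*s+2) * K^(2*s+1)) * (2^(2*s+2) * K^(2*s+1)))
            * ((‖M k‖*‖b‖)*(‖M k‖*‖b‖*‖M (k-1)‖))) := by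
      gcongr
    have h2 : K^(2*(s+1)+2) * (((2^(2*s+2) * K^(2*s+1)) * (2^(2*s+2) * K^(2*s+1)))
            * ((‖M k‖*‖b‖)*(‖M k‖*‖b‖*‖M (k-1)‖)))
        = (2^(2*s+2))^2 * ((‖M k‖*K^(2*(s+1)))*‖b‖*((‖M k‖*K^(2*(s+1)))*‖b‖*(‖M (k-1)‖*K^(2*(s+1))))) := by
      ring
    rw [h2] at h1
    refine le_trans h1 ?_
    calc (2^(2*s+2))^2 * ((‖M k‖*K^(2*(s+1)))*‖b‖*((‖M k‖*K^(2*(s+1)))*‖b‖*(‖M (k-1)‖*K^(2*(s+1)))))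
        ≤ (2^(2*s+2))^2 * (c₃*c₂*(c₃*c₂*c₃)) := by
          gcongr <;> positivity
      _ = (2^(2*s+2))^2*c₂^2*c₃^3 := by ring
  have hKpow0 : (0:ℝ) ≤ K^(2*(s+1)+2) := by positivity
  calc |(k:ℝ)|^(2*(s+1)+2) * ‖M (k + 1) - 2 • M k + M (k - 1)‖
      = K^(2*(s+1)+2) * ‖M (k + 1) - 2 • M k + M (k - 1)‖ := by rw [hKdef]
    _ ≤ K^(2*(s+1)+2) * (‖e₀ - e₁‖ * ‖Y‖ + (‖e₁‖)^2 * ‖U‖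
        + (‖e₁‖ * ‖e₀‖) * ‖V‖) :=
        mul_le_mul_of_nonneg_left hnS hKpow0
    _ = K^(2*(s+1)+2) * (‖e₀-e₁‖ * ‖Y‖)
        + K^(2*(s+1)+2) * ((‖e₁‖)^2 * ‖U‖)
        + K^(2*(s+1)+2) * ((‖e₁‖ * ‖e₀‖) * ‖V‖) := by ring
    _ ≤ 2^(2*s+3)*c₂*c₃^2 + (2^(2*s+2))^2*c₂^2*c₃^3 + (2^(2*s+2))^2*c₂^2*c₃^3 := by
        exact add_le_add (add_le_add T3 T1) T2
    _ = 2*(2^(2*s+2))^2*c₂^2*c₃^3 + 2^(2*s+3)*c₂*c₃^2 := by ring
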